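/- Let n m : ℕ. For every bounded lattice homomorphism H : (Fin n → Prop) → (Fin m → Prop), where both function types carry the pointwise Boolean algebra structure, there exists a unique function k : Fin m → Fin n such that H p = p ∘ k for all p : Fin n → Prop. -/
import Mathlib


/-- Every bounded lattice homomorphism `(Fin n → Prop) → (Fin m → Prop)` between the
pointwise Boolean algebras `2^n` and `2^m` is induced by precomposition with a unique
function `k : Fin m → Fin n`. -/
theorem stmt8 (n m : ℕ) (H : BoundedLatticeHom (Fin n → Prop) (Fin m → Prop)) :
    ∃! k : Fin m → Fin n, ∀ p : Fin n → Prop, H p = p ∘ k := by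
  classical
  set χ : Fin n → (Fin n → Prop) := fun i x => x = i with hχ
  -- decomposition of any p as a finite sup
  have hdecomp : ∀ p : Fin n → Prop,
      p = (Finset.univ.sup (fun i => (fun x => p i ∧ x = i)) : Fin n → Prop) := by
    intro p
    funext x
    rw [Finset.sup_apply]
    rw [eq_iff_iff, Finset.sup_eq_iSup]
    simp
  have hHg : ∀ (p : Fin n → Prop) (i : Fin n),
      H (fun x => p i ∧ x = i) = fun j => p i ∧ H (χ i) j := by
    intro p i
    by_cases h : p i
    · have e : (fun x => p i ∧ x = i) = χ i := by
        funext x; rw [eq_iff_iff]; simp [hχ, h]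
      rw [e]; funext j; rw [eq_iff_iff]; simp [h]
    · have e : (fun x => p i ∧ x = i) = (⊥ : Fin n → Prop) := by
        funext x; rw [eq_iff_iff]; simp [h, Pi.bot_apply, Prop.bot_eq_false]
      rw [e, map_bot]; funext j; rw [eq_iff_iff]
      simp [h, Pi.bot_apply, Prop.bot_eq_false]
  -- main pointwise formula
  have hmain : ∀ (p : Fin n → Prop) (j : Fin m),
      H p j ↔ ∃ i, p i ∧ H (χ i) j := by
    intro p j
    conv_lhs => rw [hdecomp p, map_finset_sup]
    rw [Finset.sup_apply, Finset.sup_eq_iSup]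
    simp only [Function.comp, hHg]
    simp
  -- unique atom at each coordinate
  have hkey : ∀ j : Fin m, ∃! i : Fin n, H (χ i) j := by
    intro j
    have htop : H (⊤ : Fin n → Prop) j := by
      rw [map_top]; trivial
    rw [hmain] at htop
    obtain ⟨i, -, hi⟩ := htop
    refine ⟨i, hi, fun i' hi' => ?_⟩
    by_contra hne
    have hbot : (χ i' ⊓ χ i : Fin n → Prop) = ⊥ := by
      funext x; rw [eq_iff_iff]
      simp only [Pi.inf_apply, Pi.bot_apply, hχ]
      constructor
      · rintro ⟨rfl, rfl⟩; exact hne rfl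
      · exact fun h => h.elim
    have : H (χ i' ⊓ χ i) j := by
      rw [map_inf]; exact ⟨hi', hi⟩
    rw [hbot, map_bot] at this
    exact this
  choose k hk huniq using hkey
  refine ⟨k, ?_, ?_⟩
  · intro p
    funext j
    rw [Function.comp_apply, eq_iff_iff, hmain]
    constructor
    · rintro ⟨i, hpi, hHi⟩
      rwa [← huniq j i hHi]
    · exact fun h => ⟨k j, h, hk j⟩
  · intro k' hk'
    funext j
    have h1 : H (χ (k' j)) j := by
      rw [hk' (χ (k' j))]
      exact rfl
    exact huniq j (k' j) h1
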